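/- Let r and t be integers with 1 ≤ t < r. Then for every n, every K_r-free graph G on n vertices satisfies ν(K_t, G) ≤ ν(K_t, T_{r−1}(n)); that is, the Turán graph on n vertices with r−1 parts maximizes the number of K_t subgraphs among K_r-free graphs on n vertices. -/

import Mathlib

open SimpleGraph

/-- The number of (not necessarily induced) subgraphs of `G` isomorphic to `T`. -/
noncomputable def subgraphCount {α β : Type*} (T : SimpleGraph α) (G : SimpleGraph β) : ℕ :=
  Nat.card {H : G.Subgraph // Nonempty (T ≃g H.coe)}

/-- `G` is `F`-free: it contains no subgraph isomorphic to `F`. -/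
def IsFFree {α β : Type*} (F : SimpleGraph α) (G : SimpleGraph β) : Prop :=
  ∀ H : G.Subgraph, IsEmpty (F ≃g H.coe)

/-- The generalized Turán number `ex(n, T, F)`. -/
noncomputable def genTuran (n : ℕ) {α γ : Type*} (T : SimpleGraph α) (F : SimpleGraph γ) : ℕ :=
  sSup {k | ∃ G : SimpleGraph (Fin n), IsFFree F G ∧ subgraphCount T G = k}

/-- The path with three edges on four vertices. -/
noncomputable def P3 : SimpleGraph (Fin 4) := pathGraph 4

open Finset
open scoped Classical

set_option maxHeartbeats 1000000

noncomputable def cc {V : Type*} (G : SimpleGraph V) (t : ℕ) : ℕ :=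
  Nat.card {s : Finset V // G.IsNClique t s}

variable {V : Type*} [Fintype V] [DecidableEq V] {G : SimpleGraph V}

/-- The subgraph of `G` spanned by a clique. -/
def cliqueSubgraph (G : SimpleGraph V) (s : Finset V) (hs : G.IsClique s) : G.Subgraph where
  verts := ↑s
  Adj a b := a ≠ b ∧ a ∈ s ∧ b ∈ s
  adj_sub := fun ⟨hne, ha, hb⟩ => hs ha hb hne
  edge_vert := fun ⟨_, ha, _⟩ => ha
  symm := ⟨fun a b ⟨h1, h2, h3⟩ => ⟨h1.symm, h3, h2⟩⟩

omit [Fintype V] [DecidableEq V] in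
lemma cliqueSubgraph_iso {t : ℕ} {s : Finset V} (hs : G.IsNClique t s) :
    Nonempty ((⊤ : SimpleGraph (Fin t)) ≃g (cliqueSubgraph G s hs.1).coe) := by
  have e : Fin t ≃ ↥(cliqueSubgraph G s hs.1).verts :=
    (finCongr hs.2.symm).trans s.equivFin.symm
  refine ⟨⟨e, ?_⟩⟩
  intro a b
  simp only [Subgraph.coe_adj, top_adj]
  constructor
  · rintro ⟨hne, -, -⟩
    exact fun h => hne (by rw [h])
  · intro hab
    refine ⟨fun h => hab (e.injective (Subtype.ext h)), (e a).2, (e b).2⟩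

omit [Fintype V] [DecidableEq V] in
lemma adj_of_iso_top {t : ℕ} {H : G.Subgraph} (e : (⊤ : SimpleGraph (Fin t)) ≃g H.coe)
    {a b : V} (ha : a ∈ H.verts) (hb : b ∈ H.verts) (hab : a ≠ b) : H.Adj a b := by
  have h1 : (⟨a, ha⟩ : H.verts) ≠ ⟨b, hb⟩ := fun h => hab (congrArg Subtype.val h)
  have h2 : e.symm ⟨a, ha⟩ ≠ e.symm ⟨b, hb⟩ := fun h => h1 (e.symm.injective h)
  have := e.map_adj_iff.mpr ((top_adj _ _).mpr h2)
  simpa using this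

lemma subgraphCount_top (t : ℕ) (G : SimpleGraph V) :
    subgraphCount (⊤ : SimpleGraph (Fin t)) G = cc G t := by
  refine Nat.card_congr (Equiv.symm ⟨fun s => ⟨cliqueSubgraph G s.1 s.2.1, cliqueSubgraph_iso s.2⟩,
    fun H => ⟨H.1.verts.toFinset, ?_, ?_⟩, ?_, ?_⟩)
  · obtain ⟨e⟩ := H.2
    intro a ha b hb hab
    simp only [Finset.mem_coe, Set.mem_toFinset] at ha hb
    exact H.1.adj_sub (adj_of_iso_top e ha hb hab)
  · obtain ⟨e⟩ := H.2
    exact (Set.toFinset_card _).trans ((Fintype.card_congr e.toEquiv.symm).trans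
      (Fintype.card_fin t))
  · rintro ⟨s, hs⟩
    ext x
    simp [cliqueSubgraph]
    have key : ∀ inst : Fintype (↑(↑s : Set V)), x ∈ @Set.toFinset V (↑s) inst ↔ x ∈ s :=
      fun inst => by simp
    exact key _
  · rintro ⟨H, hH⟩
    obtain ⟨e⟩ := hH
    refine Subtype.ext ?_
    apply SimpleGraph.Subgraph.ext
    · simp [cliqueSubgraph]
    · ext a b
      simp only [cliqueSubgraph, Set.mem_toFinset]
      constructor
      · rintro ⟨hne, ha, hb⟩
        exact adj_of_iso_top e ha hb hne
      · intro h
        exact ⟨(H.adj_sub h).ne, H.edge_vert h, H.edge_vert (H.adj_symm h)⟩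

lemma cliqueFree_of_isFFree {r : ℕ} (hG : IsFFree (⊤ : SimpleGraph (Fin r)) G) :
    G.CliqueFree r := by
  intro s hs
  obtain ⟨e⟩ := cliqueSubgraph_iso hs
  exact (hG _).false e

lemma cc_eq_card (G : SimpleGraph V) (t : ℕ) :
    cc G t = (univ.filter fun s : Finset V => G.IsNClique t s).card := by
  rw [cc, Nat.card_eq_fintype_card, Fintype.card_subtype]

omit [Fintype V] [DecidableEq V] in
lemma cc_zero (G : SimpleGraph V) : cc G 0 = 1 := by
  have e : {s : Finset V // G.IsNClique 0 s} ≃ Unit :=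
    { toFun := fun _ => ()
      invFun := fun _ => ⟨∅, isNClique_zero.mpr rfl⟩
      left_inv := fun s => Subtype.ext (isNClique_zero.mp s.2).symm
      right_inv := fun _ => rfl }
  rw [cc, Nat.card_congr e, Nat.card_unique]

omit [Fintype V] [DecidableEq V] in
lemma isNClique_map_of_inj {V' : Type*} {G' : SimpleGraph V'} (f : V ↪ V')
    (hadj : ∀ x y, G.Adj x y → G'.Adj (f x) (f y)) {t : ℕ} {s : Finset V}
    (hs : G.IsNClique t s) : G'.IsNClique t (s.map f) := by
  constructor
  · rintro a ha b hb hab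
    simp only [Finset.coe_map, Set.mem_image, Finset.mem_coe] at ha hb
    obtain ⟨x, hx, rfl⟩ := ha
    obtain ⟨y, hy, rfl⟩ := hb
    exact hadj x y (hs.1 hx hy (fun h => hab (by rw [h])))
  · rw [Finset.card_map]; exact hs.2

omit [Fintype V] [DecidableEq V] in
lemma cc_le_of_inj {V' : Type*} [Fintype V'] {G' : SimpleGraph V'} (f : V → V')
    (hf : Function.Injective f) (hadj : ∀ x y, G.Adj x y → G'.Adj (f x) (f y)) (t : ℕ) :
    cc G t ≤ cc G' t := by
  apply Nat.card_le_card_of_injective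
    (fun s : {s : Finset V // G.IsNClique t s} =>
      (⟨s.1.map ⟨f, hf⟩, isNClique_map_of_inj ⟨f, hf⟩ hadj s.2⟩ :
        {s : Finset V' // G'.IsNClique t s}))
  intro s s' h
  simpa [Subtype.ext_iff, Finset.map_inj] using h

section multipartite

variable {π : V → ℕ}

omit [Fintype V] [DecidableEq V] in
lemma injOn_of_clique (h : ∀ x y, G.Adj x y ↔ π x ≠ π y) {s : Finset V}
    (hs : G.IsClique ↑s) : Set.InjOn π ↑s := by
  intro x hx y hy hxy
  by_contra hne
  exact ((h x y).mp (hs hx hy hne)) hxy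

lemma clique_image_card (h : ∀ x y, G.Adj x y ↔ π x ≠ π y) :
    ∀ (t : ℕ) (S : Finset ℕ), S.card = t →
      (univ.filter fun s : Finset V => G.IsNClique t s ∧ s.image π = S).card
        = ∏ j ∈ S, (univ.filter fun x => π x = j).card := by
  intro t
  induction t with
  | zero =>
    intro S hS
    rw [Finset.card_eq_zero] at hS
    subst hS
    rw [Finset.prod_empty]
    convert Finset.card_singleton (∅ : Finset V)
    ext s
    simp [isNClique_zero]
  | succ t ih =>
    intro S hS
    have hSne : S.Nonempty := Finset.card_pos.mp (by omega)
    obtain ⟨j₀, hj₀⟩ := hSne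
    set S' := S.erase j₀ with hS'
    have hS'card : S'.card = t := by rw [hS', Finset.card_erase_of_mem hj₀, hS]; omega
    set T1 := univ.filter fun s : Finset V => G.IsNClique (t + 1) s ∧ s.image π = S with hT1
    set T2 := (univ.filter fun x => π x = j₀) ×ˢ
      (univ.filter fun s' : Finset V => G.IsNClique t s' ∧ s'.image π = S') with hT2
    have hcard : T1.card = T2.card := by
      rcases isEmpty_or_nonempty V with hV | hV
      · have h1 : T1 = ∅ := by
          rw [Finset.eq_empty_iff_forall_notMem]
          rintro s hs
          rw [hT1, Finset.mem_filter] at hs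
          obtain ⟨-, hs, himg⟩ := hs
          have : j₀ ∈ s.image π := himg ▸ hj₀
          obtain ⟨x, -, -⟩ := Finset.mem_image.mp this
          exact hV.false x
        have h2 : T2 = ∅ := by
          rw [hT2, Finset.product_eq_empty]
          left
          rw [Finset.eq_empty_iff_forall_notMem]
          intro x _
          exact hV.false x
        simp [h1, h2]
      · -- the element of `s` with value `j₀`
        set f : Finset V → V := fun s =>
          if hh : (s.filter fun x => π x = j₀).Nonempty then hh.choose
          else Classical.arbitrary V with hf
        have hfs : ∀ s : Finset V, j₀ ∈ s.image π → f s ∈ s ∧ π (f s) = j₀ := by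
          intro s hjs
          obtain ⟨x, hx, hπx⟩ := Finset.mem_image.mp hjs
          have hne : (s.filter fun x => π x = j₀).Nonempty := ⟨x, Finset.mem_filter.mpr ⟨hx, hπx⟩⟩
          have := hne.choose_spec
          rw [Finset.mem_filter] at this
          rw [hf]
          simp only [dif_pos hne]
          exact this
        apply le_antisymm
        · -- T1 → T2 by s ↦ (f s, s.erase (f s))
          apply Finset.card_le_card_of_injOn (fun s => (f s, s.erase (f s)))
          · intro s hs
            rw [Finset.mem_coe, hT1, Finset.mem_filter] at hs
            obtain ⟨-, hclique, himg⟩ := hs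
            have hj₀s : j₀ ∈ s.image π := himg ▸ hj₀
            obtain ⟨hfmem, hfval⟩ := hfs s hj₀s
            rw [Finset.mem_coe, hT2, Finset.mem_product]
            refine ⟨Finset.mem_filter.mpr ⟨Finset.mem_univ _, hfval⟩, Finset.mem_filter.mpr
              ⟨Finset.mem_univ _, ⟨hclique.1.subset (Finset.erase_subset _ _), ?_⟩, ?_⟩⟩
            · rw [Finset.card_erase_of_mem hfmem, hclique.2]; omega
            · -- image of erase is S'
              ext j
              simp only [Finset.mem_image, Finset.mem_erase, hS']
              constructor
              · rintro ⟨y, ⟨hyne, hys⟩, rfl⟩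
                refine ⟨fun hj => hyne ?_, himg ▸ Finset.mem_image_of_mem π hys⟩
                exact injOn_of_clique h hclique.1 hys hfmem (hj.trans hfval.symm)
              · rintro ⟨hjne, hjS⟩
                rw [← himg] at hjS
                obtain ⟨y, hys, rfl⟩ := Finset.mem_image.mp hjS
                exact ⟨y, ⟨fun hy => hjne (hy ▸ hfval), hys⟩, rfl⟩
          · intro s hs s₂ hs₂ heq
            simp only [hT1, Finset.mem_coe, Finset.mem_filter] at hs hs₂
            have he1 : f s = f s₂ := congrArg Prod.fst heq
            have he2 : s.erase (f s) = s₂.erase (f s₂) := congrArg Prod.snd heq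
            have h1 : j₀ ∈ s.image π := hs.2.2 ▸ hj₀
            have h2 : j₀ ∈ s₂.image π := hs₂.2.2 ▸ hj₀
            rw [← Finset.insert_erase (hfs s h1).1, ← Finset.insert_erase (hfs s₂ h2).1,
              he2, he1]
        · -- T2 → T1 by (x, s') ↦ insert x s'
          apply Finset.card_le_card_of_injOn (fun p => insert p.1 p.2)
          · rintro ⟨x, s'⟩ hp
            rw [Finset.mem_coe, hT2, Finset.mem_product, Finset.mem_filter, Finset.mem_filter] at hp
            obtain ⟨⟨-, hx⟩, -, ⟨hcl, hcd⟩, himg⟩ := hp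
            have hxs' : x ∉ s' := fun hmem => by
              have : π x ∈ s'.image π := Finset.mem_image_of_mem π hmem
              rw [himg, hx, hS'] at this
              exact (Finset.mem_erase.mp this).1 rfl
            rw [Finset.mem_coe, hT1, Finset.mem_filter]
            refine ⟨Finset.mem_univ _, ⟨?_, ?_⟩, ?_⟩
            · intro a ha b hb hab
              simp only [Finset.coe_insert, Set.mem_insert_iff, Finset.mem_coe] at ha hb
              rcases ha with rfl | ha <;> rcases hb with rfl | hb
              · exact absurd rfl hab
              · refine (h a b).mpr ?_
                rw [hx]
                intro hc
                have : π b ∈ s'.image π := Finset.mem_image_of_mem π hb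
                rw [himg, hS', ← hc] at this
                exact (Finset.mem_erase.mp this).1 rfl
              · refine (h a b).mpr ?_
                rw [hx]
                intro hc
                have : π a ∈ s'.image π := Finset.mem_image_of_mem π ha
                rw [himg, hS', hc] at this
                exact (Finset.mem_erase.mp this).1 rfl
              · exact hcl ha hb hab
            · rw [Finset.card_insert_of_notMem hxs', hcd]
            · rw [Finset.image_insert, himg, hx, hS', Finset.insert_erase hj₀]
          · rintro ⟨x, s'⟩ hp ⟨y, s''⟩ hq heq
            have heq' : insert x s' = insert y s'' := heq
            simp only [hT2, Finset.mem_coe, Finset.mem_product, Finset.mem_filter] at hp hq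
            obtain ⟨⟨-, hx⟩, -, -, himg⟩ := hp
            obtain ⟨⟨-, hy⟩, -, -, himg'⟩ := hq
            have hxs' : x ∉ s' := fun hmem => by
              have : π x ∈ s'.image π := Finset.mem_image_of_mem π hmem
              rw [himg, hx, hS'] at this
              exact (Finset.mem_erase.mp this).1 rfl
            have hys'' : y ∉ s'' := fun hmem => by
              have : π y ∈ s''.image π := Finset.mem_image_of_mem π hmem
              rw [himg', hy, hS'] at this
              exact (Finset.mem_erase.mp this).1 rfl
            have hxy : x = y := by
              by_contra hne
              have hxmem : x ∈ insert y s'' := heq' ▸ Finset.mem_insert_self x s'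
              rcases Finset.mem_insert.mp hxmem with hc | hc
              · exact hne hc
              · have : π x ∈ s''.image π := Finset.mem_image_of_mem π hc
                rw [himg', hx, hS'] at this
                exact (Finset.mem_erase.mp this).1 rfl
            subst hxy
            have : s' = s'' := by
              have := congrArg (fun z => Finset.erase z x) heq'
              simpa [Finset.erase_insert hxs', Finset.erase_insert hys''] using this
            rw [this]
    rw [hcard, hT2, Finset.card_product, ih S' hS'card, ← Finset.mul_prod_erase S _ hj₀]
end multipartite

lemma cc_multipartite (π : V → ℕ) (u : Finset ℕ) (hu : ∀ x, π x ∈ u)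
    (h : ∀ x y, G.Adj x y ↔ π x ≠ π y) (t : ℕ) :
    cc G t = ∑ S ∈ u.powersetCard t, ∏ j ∈ S, (univ.filter fun x => π x = j).card := by
  rw [cc_eq_card]
  rw [Finset.card_eq_sum_card_fiberwise (f := fun s : Finset V => s.image π)
    (t := u.powersetCard t) ?_]
  · refine Finset.sum_congr rfl fun S hS => ?_
    rw [Finset.filter_filter]
    exact clique_image_card h t S (Finset.mem_powersetCard.mp hS).2
  · intro s hs
    rw [Finset.mem_coe, Finset.mem_filter] at hs
    rw [Finset.mem_coe, Finset.mem_powersetCard]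
    constructor
    · intro j hj
      obtain ⟨x, -, rfl⟩ := Finset.mem_image.mp hj
      exact hu x
    · rw [Finset.card_image_of_injOn (injOn_of_clique h hs.2.1), hs.2.2]

/-- Number of `i < n` with `i % p = j`: the part sizes of the Turán graph. -/
def w (n p j : ℕ) : ℕ := ((Finset.range n).filter fun i => i % p = j).card

lemma card_filter_univ_fin (n : ℕ) (P : ℕ → Prop) [DecidablePred P] :
    ((univ : Finset (Fin n)).filter fun i : Fin n => P ↑i).card = ((Finset.range n).filter P).card := by
  apply Finset.card_bij (fun (i : Fin n) (_ : i ∈ univ.filter fun i : Fin n => P ↑i) => (i : ℕ))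
  · intro a ha
    rw [Finset.mem_filter] at ha ⊢
    exact ⟨Finset.mem_range.mpr a.2, ha.2⟩
  · intro a _ b _ hab
    exact Fin.ext hab
  · intro b hb
    rw [Finset.mem_filter, Finset.mem_range] at hb
    exact ⟨⟨b, hb.1⟩, Finset.mem_filter.mpr ⟨Finset.mem_univ _, hb.2⟩, rfl⟩

lemma cc_turan (n p t : ℕ) (hp : 1 ≤ p) :
    cc (turanGraph n p) t = ∑ S ∈ (Finset.range p).powersetCard t, ∏ j ∈ S, w n p j := by
  rw [cc_multipartite (fun i : Fin n => (i : ℕ) % p) (Finset.range p)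
    (fun x => Finset.mem_range.mpr (Nat.mod_lt _ hp)) (fun x y => Iff.rfl) t]
  exact Finset.sum_congr rfl fun S _ => Finset.prod_congr rfl fun j _ =>
    card_filter_univ_fin n (fun i => i % p = j)

/-- Elementary symmetric function of `c` over index set `u`. -/
def Esym (u : Finset ℕ) (t : ℕ) (c : ℕ → ℕ) : ℕ := ∑ S ∈ u.powersetCard t, ∏ j ∈ S, c j

lemma Esym_zero (u : Finset ℕ) (c : ℕ → ℕ) : Esym u 0 c = 1 := by
  simp [Esym, Finset.powersetCard_zero]

lemma Esym_congr {u : Finset ℕ} {c c' : ℕ → ℕ} (h : ∀ j ∈ u, c j = c' j) (t : ℕ) :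
    Esym u t c = Esym u t c' :=
  Finset.sum_congr rfl fun S hS => Finset.prod_congr rfl fun j hj =>
    h j ((Finset.mem_powersetCard.mp hS).1 hj)

lemma Esym_one (u : Finset ℕ) (c : ℕ → ℕ) : Esym u 1 c = ∑ j ∈ u, c j := by
  rw [Esym, Finset.powersetCard_one, Finset.sum_map]
  simp

lemma Esym_insert {x : ℕ} {u : Finset ℕ} (hx : x ∉ u) (t : ℕ) (c : ℕ → ℕ) :
    Esym (insert x u) (t + 1) c = Esym u (t + 1) c + c x * Esym u t c := by
  rw [Esym, Finset.powersetCard_succ_insert hx, Finset.sum_union, Finset.sum_image]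
  · rw [Esym, Esym, Finset.mul_sum]
    congr 1
    refine Finset.sum_congr rfl fun S hS => ?_
    rw [Finset.prod_insert fun hmem => hx ((Finset.mem_powersetCard.mp hS).1 hmem)]
  · intro S hS S' hS' hSS
    have h1 : x ∉ S := fun hm => hx ((Finset.mem_powersetCard.mp hS).1 hm)
    have h2 : x ∉ S' := fun hm => hx ((Finset.mem_powersetCard.mp hS').1 hm)
    rw [← Finset.erase_insert h1, ← Finset.erase_insert h2, hSS]
  · rw [Finset.disjoint_left]
    intro S hS hS'
    obtain ⟨S', hS', rfl⟩ := Finset.mem_image.mp hS'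
    exact hx ((Finset.mem_powersetCard.mp hS).1 (Finset.mem_insert_self x S'))

lemma Esym_eq_esymm (u : Finset ℕ) (t : ℕ) (c : ℕ → ℕ) :
    Esym u t c = (u.val.map c).esymm t :=
  (Finset.esymm_map_val c u t).symm

lemma sum_w (n p : ℕ) (hp : 1 ≤ p) : ∑ j ∈ Finset.range p, w n p j = n := by
  have := Finset.card_eq_sum_card_fiberwise (s := Finset.range n) (t := Finset.range p)
    (f := fun i => i % p) (fun x _ => Finset.mem_range.mpr (Nat.mod_lt _ hp))
  rw [Finset.card_range] at this
  conv_rhs => rw [this]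
  rfl

lemma w_eq (n p : ℕ) (hp : 1 ≤ p) (j : ℕ) (hj : j < p) :
    w n p j = n / p + if j < n % p then 1 else 0 := by
  induction n with
  | zero => simp [w]
  | succ n ih =>
    have hstep : w (n + 1) p j = w n p j + if n % p = j then 1 else 0 := by
      rw [w, w, Finset.range_add_one, Finset.filter_insert]
      by_cases hc : n % p = j
      · rw [if_pos hc, if_pos hc, Finset.card_insert_of_notMem (by simp)]
      · rw [if_neg hc, if_neg hc, add_zero]
    rw [hstep, ih]
    rcases eq_or_lt_of_le hp with hp1 | hp2
    · -- p = 1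
      have hj0 : j = 0 := by omega
      subst hj0
      rw [← hp1]
      simp [Nat.mod_one]
    · have hmod : n % p < p := Nat.mod_lt _ hp
      have hdm := Nat.div_add_mod n p
      have h1mod : 1 % p = 1 := Nat.mod_eq_of_lt hp2
      have hmodsucc : (n + 1) % p = (n % p + 1) % p := by
        rw [Nat.add_mod, h1mod]
      by_cases hd : n % p + 1 = p
      · have hm0 : (n + 1) % p = 0 := by rw [hmodsucc, hd, Nat.mod_self]
        have hn1 : n + 1 = p * (n / p + 1) := by rw [Nat.mul_succ]; omega
        have hdiv : (n + 1) / p = n / p + 1 := by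
          rw [hn1, Nat.mul_div_cancel_left _ (by omega : 0 < p)]
        rw [hm0, hdiv]
        split_ifs <;> omega
      · have hm1 : (n + 1) % p = n % p + 1 := by
          rw [hmodsucc, Nat.mod_eq_of_lt (by omega)]
        have hdiv : (n + 1) / p = n / p := by
          have h2 : n + 1 = (n % p + 1) + p * (n / p) := by omega
          rw [h2, Nat.add_mul_div_left _ _ (by omega : 0 < p),
            Nat.div_eq_of_lt (by omega), Nat.zero_add]
        rw [hm1, hdiv]
        split_ifs <;> omega

section smoothing

variable {p i j : ℕ} {c : ℕ → ℕ}

/-- Two-step decomposition of `Esym` isolating indices `i` and `j`. -/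
lemma Esym_decomp (hi : i ∈ Finset.range p) (hj : j ∈ Finset.range p) (hij : i ≠ j)
    (k : ℕ) (d : ℕ → ℕ) :
    Esym (Finset.range p) (k + 2) d =
      Esym (((Finset.range p).erase i).erase j) (k + 2) d
        + (d i + d j) * Esym (((Finset.range p).erase i).erase j) (k + 1) d
        + d i * d j * Esym (((Finset.range p).erase i).erase j) k d := by
  set s0 := ((Finset.range p).erase i).erase j with hs0
  have hj' : j ∈ (Finset.range p).erase i := Finset.mem_erase.mpr ⟨fun h => hij h.symm, hj⟩
  have e1 : (Finset.range p).erase i = insert j s0 := (Finset.insert_erase hj').symm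
  have e2 : Finset.range p = insert i ((Finset.range p).erase i) :=
    (Finset.insert_erase hi).symm
  have hii : i ∉ (Finset.range p).erase i := Finset.notMem_erase _ _
  have hjj : j ∉ s0 := Finset.notMem_erase _ _
  rw [e2, Esym_insert hii, e1, Esym_insert hjj, Esym_insert hjj]
  ring

lemma Esym_smooth_step (hi : i ∈ Finset.range p) (hj : j ∈ Finset.range p) (hij : i ≠ j)
    (h2 : c j + 2 ≤ c i) (t : ℕ) :
    Esym (Finset.range p) t c ≤ Esym (Finset.range p) t
      (fun x => if x = i then c i - 1 else if x = j then c j + 1 else c x) := by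
  set c' : ℕ → ℕ := fun x => if x = i then c i - 1 else if x = j then c j + 1 else c x with hc'
  have ei : c' i = c i - 1 := by simp [hc']
  have hji : j ≠ i := fun h => hij h.symm
  have ej : c' j = c j + 1 := by simp [hc', hji]
  have hs0 : ∀ x ∈ ((Finset.range p).erase i).erase j, c x = c' x := by
    intro x hx
    obtain ⟨hxj, hxi, -⟩ := Finset.mem_erase.mp hx |>.imp id (Finset.mem_erase.mp ·)
    simp [hc', hxi, hxj]
  match t with
  | 0 => rw [Esym_zero, Esym_zero]
  | 1 =>
    rw [Esym_one, Esym_one]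
    apply le_of_eq
    have hj' : j ∈ (Finset.range p).erase i := Finset.mem_erase.mpr ⟨fun h => hij h.symm, hj⟩
    have hS : ∑ x ∈ ((Finset.range p).erase i).erase j, c x
        = ∑ x ∈ ((Finset.range p).erase i).erase j, c' x := Finset.sum_congr rfl hs0
    rw [← Finset.add_sum_erase _ c hi, ← Finset.add_sum_erase _ c' hi,
      ← Finset.add_sum_erase _ c hj', ← Finset.add_sum_erase _ c' hj', ei, ej, ← hS]
    omega
  | (k + 2) =>
    rw [Esym_decomp hi hj hij k c, Esym_decomp hi hj hij k c',
      ← Esym_congr hs0 (k + 2), ← Esym_congr hs0 (k + 1), ← Esym_congr hs0 k, ei, ej]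
    have hsum : c i - 1 + (c j + 1) = c i + c j := by omega
    have hprod : c i * c j ≤ (c i - 1) * (c j + 1) := by
      obtain ⟨m, hm⟩ : ∃ m, c i = m + 1 := ⟨c i - 1, by omega⟩
      rw [hm, Nat.succ_sub_one]
      nlinarith [show c j + 1 ≤ m by omega]
    rw [hsum]
    have := Nat.mul_le_mul_right (Esym (((Finset.range p).erase i).erase j) k c) hprod
    omega


end smoothing

lemma Esym_le_turan_parts (p : ℕ) (hp : 1 ≤ p) (t : ℕ) (N : ℕ) :
    ∀ c : ℕ → ℕ, (∑ x ∈ Finset.range p, (c x) ^ 2) ≤ N →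
      Esym (Finset.range p) t c
        ≤ Esym (Finset.range p) t (w (∑ x ∈ Finset.range p, c x) p) := by
  induction N using Nat.strong_induction_on with
  | _ N IH =>
  intro c hc
  by_cases hA : ∃ i ∈ Finset.range p, ∃ j ∈ Finset.range p, c j + 2 ≤ c i
  · obtain ⟨i, hi, j, hj, h2⟩ := hA
    have hij : i ≠ j := by intro h; subst h; omega
    set c' : ℕ → ℕ := fun x => if x = i then c i - 1 else if x = j then c j + 1 else c x
      with hc'
    have hji : j ≠ i := fun h => hij h.symm
    have ei : c' i = c i - 1 := by simp [hc']
    have ej : c' j = c j + 1 := by simp [hc', hji]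
    have hs0 : ∀ x ∈ ((Finset.range p).erase i).erase j, c' x = c x := by
      intro x hx
      have hxj := (Finset.mem_erase.mp hx).1
      have hxi := (Finset.mem_erase.mp (Finset.mem_erase.mp hx).2).1
      simp [hc', hxi, hxj]
    have hj' : j ∈ (Finset.range p).erase i := Finset.mem_erase.mpr ⟨hji, hj⟩
    set s0 := ((Finset.range p).erase i).erase j with hs0def
    have decompose : ∀ f : ℕ → ℕ, ∑ x ∈ Finset.range p, f x = f i + (f j + ∑ x ∈ s0, f x) :=
      fun f => by rw [← Finset.add_sum_erase _ f hi, ← Finset.add_sum_erase _ f hj']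
    have e3 : ∑ x ∈ s0, c' x = ∑ x ∈ s0, c x := Finset.sum_congr rfl hs0
    have e3sq : ∑ x ∈ s0, c' x ^ 2 = ∑ x ∈ s0, c x ^ 2 :=
      Finset.sum_congr rfl fun x hx => by rw [hs0 x hx]
    have hsumeq : ∑ x ∈ Finset.range p, c' x = ∑ x ∈ Finset.range p, c x := by
      rw [decompose c, decompose c', e3, ei, ej]
      omega
    have hsqkey : (c i - 1) ^ 2 + (c j + 1) ^ 2 + 2 ≤ c i ^ 2 + c j ^ 2 := by
      obtain ⟨m, hm⟩ : ∃ m, c i = m + 1 := ⟨c i - 1, by omega⟩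
      rw [hm, Nat.succ_sub_one]
      nlinarith [show c j + 1 ≤ m by omega]
    have d1 := decompose (fun x => c x ^ 2)
    have d2 := decompose (fun x => c' x ^ 2)
    simp only [ei, ej, e3sq] at d2
    calc Esym (Finset.range p) t c ≤ Esym (Finset.range p) t c' :=
          Esym_smooth_step hi hj hij h2 t
      _ ≤ Esym (Finset.range p) t (w (∑ x ∈ Finset.range p, c' x) p) :=
          IH (N - 1) (by omega) c' (by omega)
      _ = Esym (Finset.range p) t (w (∑ x ∈ Finset.range p, c x) p) := by rw [hsumeq]
  · push_neg at hA
    set n := ∑ x ∈ Finset.range p, c x with hn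
    have hne : (Finset.range p).Nonempty := ⟨0, Finset.mem_range.mpr (by omega)⟩
    obtain ⟨j₀, hj₀, hmin⟩ := Finset.exists_min_image (Finset.range p) c hne
    set L := c j₀ with hL
    have hub : ∀ x ∈ Finset.range p, c x ≤ L + 1 := fun x hx => by
      have := hA x hx j₀ hj₀
      omega
    have hcvals : ∀ x ∈ Finset.range p, c x = L ∨ c x = L + 1 := fun x hx => by
      have h1 := hmin x hx
      have h2 := hub x hx
      omega
    set k := ((Finset.range p).filter fun x => c x = L + 1).card with hk
    have hsum : n = p * L + k := by
      rw [hn]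
      have : ∀ x ∈ Finset.range p, c x = L + (if c x = L + 1 then 1 else 0) := by
        intro x hx
        rcases hcvals x hx with h | h <;> simp [h]
      rw [Finset.sum_congr rfl this, Finset.sum_add_distrib, Finset.sum_const,
        Finset.card_range, ← Finset.card_filter]
      rfl
    have hkp : k < p := by
      have hsub : ((Finset.range p).filter fun x => c x = L + 1) ⊆ (Finset.range p).erase j₀ := by
        intro x hx
        rw [Finset.mem_filter] at hx
        refine Finset.mem_erase.mpr ⟨fun h => ?_, hx.1⟩
        subst h
        omega
      have := Finset.card_le_card hsub
      rw [Finset.card_erase_of_mem hj₀, Finset.card_range] at this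
      omega
    have hdiv : n / p = L := by rw [hsum, Nat.mul_add_div (by omega), Nat.div_eq_of_lt hkp, Nat.add_zero]
    have hmod : n % p = k := by rw [hsum, Nat.mul_add_mod, Nat.mod_eq_of_lt hkp]
    have hwvals : ∀ x ∈ Finset.range p, w n p x = if x < k then L + 1 else L := by
      intro x hx
      rw [w_eq n p hp x (Finset.mem_range.mp hx), hdiv, hmod]
      split_ifs <;> omega
    have hmulti : (Finset.range p).val.map c = (Finset.range p).val.map (w n p) := by
      rw [Multiset.ext]
      intro x
      rw [Multiset.count_map, Multiset.count_map]
      have count_eq : ∀ (P : ℕ → Prop) [DecidablePred P],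
          Multiset.card (Multiset.filter P (Finset.range p).val)
            = ((Finset.range p).filter P).card := by
        intro P _
        rw [Finset.card_def, Finset.filter_val]
      rw [count_eq, count_eq]
      have hrangek : (Finset.range p).filter (fun a => a < k) = Finset.range k := by
        ext a
        simp only [Finset.mem_filter, Finset.mem_range]
        omega
      by_cases hx1 : x = L + 1
      · have l1 : (Finset.range p).filter (fun a => x = c a)
            = (Finset.range p).filter (fun a => c a = L + 1) := by
          refine Finset.filter_congr fun a ha => ?_
          subst hx1
          exact ⟨fun h => h.symm, fun h => h.symm⟩
        have r1 : (Finset.range p).filter (fun a => x = w n p a) = Finset.range k := by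
          rw [← hrangek]
          refine Finset.filter_congr fun a ha => ?_
          rw [hwvals a ha]
          subst hx1
          split_ifs with h <;> omega
        rw [l1, r1, Finset.card_range, ← hk]
      · by_cases hx2 : x = L
        · have l2 : (Finset.range p).filter (fun a => x = c a)
              = (Finset.range p).filter (fun a => ¬ (c a = L + 1)) := by
            refine Finset.filter_congr fun a ha => ?_
            subst hx2
            rcases hcvals a ha with h | h <;> omega
          have r2 : (Finset.range p).filter (fun a => x = w n p a)
              = (Finset.range p).filter (fun a => ¬ a < k) := by
            refine Finset.filter_congr fun a ha => ?_
            rw [hwvals a ha]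
            subst hx2
            split_ifs with h <;> omega
          have a1 : #(Finset.filter (fun a => c a = L + 1) (Finset.range p))
              + #(Finset.filter (fun a => ¬(c a = L + 1)) (Finset.range p)) = p := by
            simpa using Finset.card_filter_add_card_filter_not
              (s := Finset.range p) (p := fun a => c a = L + 1)
          have a2 : #(Finset.filter (fun a => a < k) (Finset.range p))
              + #(Finset.filter (fun a => ¬ a < k) (Finset.range p)) = p := by
            simpa using Finset.card_filter_add_card_filter_not
              (s := Finset.range p) (p := fun a => a < k)
          rw [hrangek, Finset.card_range] at a2
          rw [l2, r2]
          omega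
        · have l3 : (Finset.range p).filter (fun a => x = c a) = ∅ := by
            rw [Finset.filter_eq_empty_iff]
            intro a ha h
            rcases hcvals a ha with h' | h' <;> omega
          have r3 : (Finset.range p).filter (fun a => x = w n p a) = ∅ := by
            rw [Finset.filter_eq_empty_iff]
            intro a ha h
            rw [hwvals a ha] at h
            split_ifs at h <;> omega
          rw [l3, r3]
    rw [Esym_eq_esymm, Esym_eq_esymm, hmulti]

lemma arith (q : ℕ) (hq : 1 ≤ q) (a n : ℕ) (han : a ≤ n) (k : ℕ) :
    Esym (Finset.range q) (k + 1) (w a q) + (n - a) * Esym (Finset.range q) k (w a q)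
      ≤ Esym (Finset.range (q + 1)) (k + 1) (w n (q + 1)) := by
  set c : ℕ → ℕ := fun j => if j = q then n - a else w a q j with hc
  have hq' : q ∉ Finset.range q := by simp
  have hcongr : ∀ t', Esym (Finset.range q) t' c = Esym (Finset.range q) t' (w a q) :=
    fun t' => Esym_congr (fun j hj => by
      have : j ≠ q := fun h => hq' (h ▸ hj)
      simp [hc, this]) t'
  have h1 : Esym (Finset.range (q + 1)) (k + 1) c
      = Esym (Finset.range q) (k + 1) (w a q) + (n - a) * Esym (Finset.range q) k (w a q) := by
    rw [Finset.range_add_one, Esym_insert hq' k c, hcongr, hcongr]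
    simp [hc]
  have h3 : ∑ x ∈ Finset.range (q + 1), c x = n := by
    rw [Finset.range_add_one, Finset.sum_insert hq']
    have : ∑ x ∈ Finset.range q, c x = ∑ x ∈ Finset.range q, w a q x :=
      Finset.sum_congr rfl fun j hj => by
        have : j ≠ q := fun h => hq' (h ▸ hj)
        simp [hc, this]
    rw [this, sum_w a q hq]
    simp [hc]
    omega
  rw [← h1, ← h3]
  exact Esym_le_turan_parts (q + 1) (by omega) (k + 1) _ c le_rfl

lemma cc_turan_mono (p t : ℕ) {m m' : ℕ} (h : m ≤ m') :
    cc (turanGraph m p) t ≤ cc (turanGraph m' p) t := by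
  apply cc_le_of_inj (fun i => Fin.castLE h i) (fun i j hij => by
    simpa [Fin.ext_iff] using hij)
  · intro x y hxy
    simpa [turanGraph] using hxy
  
lemma cliqueFree_nbhd {V : Type*} [Fintype V] {G : SimpleGraph V} {m : ℕ}
    (hfree : G.CliqueFree (m + 1)) (b : V) :
    (G.comap (Subtype.val : {x // x ∈ G.neighborFinset b} → V)).CliqueFree m := by
  intro s hs
  have hs' : G.IsNClique m (s.map (Function.Embedding.subtype _)) :=
    isNClique_map_of_inj _ (fun x y h => h) hs
  apply hfree (insert b (s.map (Function.Embedding.subtype _)))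
  apply hs'.insert
  intro x hx
  obtain ⟨y, hy, rfl⟩ := Finset.mem_map.mp hx
  exact (G.mem_neighborFinset b _).mp y.2

lemma ccOn_le {V : Type*} [Fintype V] [DecidableEq V] {G : SimpleGraph V} (B : Finset V)
    (t : ℕ) :
    (univ.filter fun s : Finset V => G.IsNClique t s ∧ s ⊆ B).card
      ≤ cc (G.comap (Subtype.val : {x // x ∈ B} → V)) t := by
  rw [cc_eq_card]
  apply Finset.card_le_card_of_injOn (fun s => s.subtype (· ∈ B))
  · intro s hs
    rw [Finset.mem_coe, Finset.mem_filter] at hs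
    obtain ⟨-, ⟨hcl, hcd⟩, hsub⟩ := hs
    rw [Finset.mem_coe, Finset.mem_filter]
    refine ⟨Finset.mem_univ _, ?_, ?_⟩
    · intro x hx y hy hxy
      simp only [Finset.mem_coe, Finset.mem_subtype] at hx hy
      exact hcl hx hy (fun h => hxy (Subtype.ext h))
    · rw [← hcd, ← Finset.card_map (Function.Embedding.subtype _), Finset.subtype_map,
        Finset.filter_true_of_mem hsub]
  · intro s₁ h₁ s₂ h₂ heq
    have heq' : s₁.subtype (· ∈ B) = s₂.subtype (· ∈ B) := heq
    simp only [Finset.mem_coe, Finset.mem_filter] at h₁ h₂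
    have r : ∀ s : Finset V, s ⊆ B →
        (s.subtype (· ∈ B)).map (Function.Embedding.subtype _) = s := by
      intro s hsub
      rw [Finset.subtype_map, Finset.filter_true_of_mem hsub]
    rw [← r s₁ h₁.2.2, ← r s₂ h₂.2.2, heq']

lemma cc_empty {V : Type*} [IsEmpty V] (G : SimpleGraph V) (k : ℕ) : cc G (k + 1) = 0 := by
  rw [cc, Nat.card_eq_zero]
  left
  refine ⟨fun p => ?_⟩
  obtain ⟨s, hs⟩ := p
  have hpos : 0 < s.card := by rw [hs.2]; omega
  obtain ⟨x, -⟩ := Finset.card_pos.mp hpos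
  exact IsEmpty.false x

lemma core : ∀ q : ℕ, 1 ≤ q → ∀ (V : Type) [Fintype V] [DecidableEq V]
    (G : SimpleGraph V), G.CliqueFree (q + 1) → ∀ t : ℕ,
    cc G t ≤ cc (turanGraph (Fintype.card V) q) t := by
  intro q hq
  induction q, hq using Nat.le_induction with
  | base =>
    intro V _ _ G hfree t
    have hbot : G = ⊥ := cliqueFree_two.mp hfree
    apply cc_le_of_inj (fun v => Fintype.equivFin V v) (Fintype.equivFin V).injective
    intro x y hxy
    rw [hbot] at hxy
    exact absurd hxy (by simp)
  | succ q hq IH =>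
    intro V _ _ G hfree t
    match t with
    | 0 =>
      rw [cc_zero, cc_zero]
    | (k+1) =>
      rcases isEmpty_or_nonempty V with hV | hV
      · rw [cc_empty]
        exact Nat.zero_le _
      · obtain ⟨v, -, hmax⟩ := Finset.exists_max_image univ (fun x => G.degree x)
          ⟨Classical.arbitrary V, Finset.mem_univ _⟩
        set A := G.neighborFinset v with hA
        set n := Fintype.card V with hn
        set a := A.card with ha
        have step1 : cc G (k+1)
            ≤ (univ.filter fun s : Finset V => G.IsNClique (k+1) s ∧ s ⊆ A).card
              + ∑ b ∈ univ \ A, (univ.filter fun s : Finset V =>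
                  G.IsNClique k s ∧ s ⊆ G.neighborFinset b).card := by
          rw [cc_eq_card]
          have hsplit : (univ.filter fun s : Finset V => G.IsNClique (k+1) s)
              = (univ.filter fun s : Finset V => G.IsNClique (k+1) s ∧ s ⊆ A)
                ∪ (univ.filter fun s : Finset V => G.IsNClique (k+1) s ∧ ¬ s ⊆ A) := by
            ext s
            simp only [Finset.mem_union, Finset.mem_filter]
            tauto
          rw [hsplit]
          refine (Finset.card_union_le _ _).trans (Nat.add_le_add_left ?_ _)
          set f : Finset V → V := fun s =>
            if h : (s \ A).Nonempty then h.choose else Classical.arbitrary V with hf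
          have hfspec : ∀ s : Finset V, ¬ s ⊆ A → f s ∈ s ∧ f s ∉ A := by
            intro s hsub
            have hne : (s \ A).Nonempty := Finset.sdiff_nonempty.mpr hsub
            have hmem := hne.choose_spec
            rw [Finset.mem_sdiff] at hmem
            rw [hf]
            simp only [dif_pos hne]
            exact hmem
          rw [Finset.card_eq_sum_card_fiberwise (f := f) (t := univ \ A) ?hmem]
          case hmem =>
            intro s hs
            rw [Finset.mem_coe, Finset.mem_filter] at hs
            rw [Finset.mem_coe, Finset.mem_sdiff]
            exact ⟨Finset.mem_univ _, (hfspec s hs.2.2).2⟩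
          refine Finset.sum_le_sum fun b hb => ?_
          apply Finset.card_le_card_of_injOn (fun s => s.erase b)
          · intro s hs
            simp only [Finset.mem_coe, Finset.mem_filter] at hs ⊢
            obtain ⟨⟨-, hcl, hsub⟩, hfb⟩ := hs
            have hbs : b ∈ s := by rw [← hfb]; exact (hfspec s hsub).1
            refine ⟨Finset.mem_univ _, ⟨hcl.1.subset (Finset.erase_subset _ _), ?_⟩, ?_⟩
            · rw [Finset.card_erase_of_mem hbs, hcl.2]; omega
            · intro x hx
              rw [Finset.mem_erase] at hx
              rw [SimpleGraph.mem_neighborFinset]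
              exact hcl.1 hbs hx.2 (fun h => hx.1 h.symm)
          · intro s₁ h₁ s₂ h₂ heq
            simp only [Finset.mem_coe, Finset.mem_filter] at h₁ h₂
            have hb₁ : b ∈ s₁ := by rw [← h₁.2]; exact (hfspec s₁ h₁.1.2.2).1
            have hb₂ : b ∈ s₂ := by rw [← h₂.2]; exact (hfspec s₂ h₂.1.2.2).1
            have heq' : s₁.erase b = s₂.erase b := heq
            rw [← Finset.insert_erase hb₁, ← Finset.insert_erase hb₂, heq']
        have hAfree : (G.comap (Subtype.val : {x // x ∈ A} → V)).CliqueFree (q+1) :=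
          cliqueFree_nbhd hfree v
        have hcardA : Fintype.card {x // x ∈ A} = a :=
          (Fintype.card_congr (Equiv.refl _)).trans (Fintype.card_coe A)
        have h2A : (univ.filter fun s : Finset V => G.IsNClique (k+1) s ∧ s ⊆ A).card
            ≤ cc (turanGraph a q) (k+1) := by
          refine (ccOn_le A (k+1)).trans ?_
          have := IH {x // x ∈ A} (G.comap Subtype.val) hAfree (k+1)
          rwa [hcardA] at this
        have h2b : ∀ b ∈ univ \ A, (univ.filter fun s : Finset V =>
            G.IsNClique k s ∧ s ⊆ G.neighborFinset b).card ≤ cc (turanGraph a q) k := by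
          intro b _
          refine (ccOn_le _ k).trans ?_
          have hbfree : (G.comap (Subtype.val : {x // x ∈ G.neighborFinset b} → V)).CliqueFree
              (q+1) := cliqueFree_nbhd hfree b
          have hthis := IH {x // x ∈ G.neighborFinset b} (G.comap Subtype.val) hbfree k
          have hcardb : Fintype.card {x // x ∈ G.neighborFinset b} = (G.neighborFinset b).card :=
            (Fintype.card_congr (Equiv.refl _)).trans (Fintype.card_coe _)
          rw [hcardb] at hthis
          refine hthis.trans (cc_turan_mono q k ?_)
          exact hmax b (Finset.mem_univ b)
        have step2 : cc G (k+1) ≤ cc (turanGraph a q) (k+1) + (n - a) * cc (turanGraph a q) k := by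
          refine step1.trans (Nat.add_le_add h2A ?_)
          calc ∑ b ∈ univ \ A, (univ.filter fun s : Finset V =>
                  G.IsNClique k s ∧ s ⊆ G.neighborFinset b).card
              ≤ ∑ _b ∈ univ \ A, cc (turanGraph a q) k := Finset.sum_le_sum h2b
            _ = (n - a) * cc (turanGraph a q) k := by
                rw [Finset.sum_const, Finset.card_univ_diff, smul_eq_mul]
        have han : a ≤ n := by rw [ha, hn]; exact Finset.card_le_univ A
        refine step2.trans ?_
        rw [cc_turan a q (k+1) hq, cc_turan a q k hq, cc_turan n (q+1) (k+1) (by omega)]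
        exact arith q hq a n han k


theorem zykov_clique_count (r t : ℕ) (ht : 1 ≤ t) (htr : t < r) (n : ℕ)
    (G : SimpleGraph (Fin n)) (hG : IsFFree (⊤ : SimpleGraph (Fin r)) G) :
    subgraphCount (⊤ : SimpleGraph (Fin t)) G ≤
      subgraphCount (⊤ : SimpleGraph (Fin t)) (turanGraph n (r - 1)) := by
  rw [subgraphCount_top, subgraphCount_top]
  have hq : 1 ≤ r - 1 := by omega
  have hfree : G.CliqueFree ((r - 1) + 1) := by
    have h := cliqueFree_of_isFFree hG
    rwa [show r - 1 + 1 = r by omega]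
  have h := core (r - 1) hq (Fin n) G hfree t
  rwa [Fintype.card_fin] at h
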